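/- Let D be a k×k Metzler matrix, c > 0, μ ≤ 0, and ξ ∈ ℝ^k a positive right eigenvector of D with D ξ = μ ξ. Let u : [0,∞) → ℝ^k be a nonnegative solution of the cumulant system, and let v : [0,∞) → ℝ^k be a differentiable solution of the linearized system dv_t/dt = D v_t − c · u_t ⊙ v_t with v_0 = ξ. Then for all t ≥ 0, componentwise: exp(μ t − c ∫₀ᵗ max_i u_{s,i} ds) · ξ ≤ v_t ≤ exp(μ t − c ∫₀ᵗ min_i u_{s,i} ds) · ξ. -/

import Mathlib

open Filter Topology

private lemma slope_le_zero {f : ℝ → ℝ} {t d : ℝ} (ht : 0 < t)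
    (hf : HasDerivAt f d t) (hft : f t = 0)
    (hpos : ∀ s, 0 ≤ s → s < t → 0 ≤ f s) : d ≤ 0 := by
  have hslope := hasDerivAt_iff_tendsto_slope.mp hf
  have h1 : Tendsto (slope f t) (𝓝[<] t) (𝓝 d) :=
    hslope.mono_left (nhdsWithin_mono _ fun s hs => ne_of_lt hs)
  refine le_of_tendsto h1 ?_
  filter_upwards [Ioo_mem_nhdsLT_of_mem (show t ∈ Set.Ioc 0 t from ⟨ht, le_refl t⟩)]
    with s hs
  have h2 : 0 ≤ f s := hpos s hs.1.le hs.2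
  have h3 : s - t < 0 := by linarith [hs.2]
  rw [slope_def_field, div_eq_mul_inv]
  have : f s - f t ≥ 0 := by rw [hft]; linarith
  nlinarith [inv_neg''.mpr h3]

private lemma key_invariance (k : ℕ) (c : ℝ) (hc : 0 < c)
    (D : Matrix (Fin k) (Fin k) ℝ)
    (hMetzler : ∀ i j : Fin k, i ≠ j → 0 ≤ D i j)
    (μ : ℝ) (hμ : μ ≤ 0) (ξ : Fin k → ℝ) (hξpos : ∀ i, 0 < ξ i)
    (heig : D.mulVec ξ = μ • ξ)
    (u : ℝ → Fin k → ℝ)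
    (hunonneg : ∀ t ∈ Set.Ici (0:ℝ), ∀ i, 0 ≤ u t i)
    (z b : ℝ → Fin k → ℝ)
    (hz : ∀ t ∈ Set.Ici (0:ℝ), ∀ i, HasDerivAt (fun s => z s i)
        (D.mulVec (z t) i - c * u t i * z t i + b t i) t)
    (hb : ∀ t ∈ Set.Ici (0:ℝ), ∀ i, 0 ≤ b t i)
    (hz0 : ∀ i, z 0 i = 0) :
    ∀ t ∈ Set.Ici (0:ℝ), ∀ i, 0 ≤ z t i := by
  have main : ∀ ε > (0:ℝ), ∀ t ∈ Set.Ici (0:ℝ), ∀ i, 0 < z t i + ε * Real.exp t * ξ i := by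
    intro ε hε t₀ ht₀
    set w : ℝ → Fin k → ℝ := fun t i => z t i + ε * Real.exp t * ξ i with hw
    show ∀ i, 0 < w t₀ i
    by_contra hcon
    push_neg at hcon
    obtain ⟨i₀, hi₀⟩ := hcon
    -- continuity of w components on [0, t₀]
    have hwcont : ∀ i, ContinuousOn (fun s => w s i) (Set.Icc 0 t₀) := by
      intro i s hs
      have h1 : ContinuousAt (fun s => z s i) s := (hz s hs.1 i).continuousAt
      have h2 : ContinuousAt (fun s => ε * Real.exp s * ξ i) s := by fun_prop
      exact (h1.add h2).continuousWithinAt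
    set S : Set ℝ := ⋃ i, (Set.Icc 0 t₀ ∩ (fun s => w s i) ⁻¹' Set.Iic 0) with hS
    have hSclosed : IsClosed S :=
      isClosed_iUnion_of_finite fun i =>
        (hwcont i).preimage_isClosed_of_isClosed isClosed_Icc isClosed_Iic
    have hSne : S.Nonempty := ⟨t₀, Set.mem_iUnion.2 ⟨i₀, ⟨⟨ht₀, le_refl _⟩, hi₀⟩⟩⟩
    have hSbdd : BddBelow S := ⟨0, fun s hs => by
      obtain ⟨i, hi⟩ := Set.mem_iUnion.1 hs; exact hi.1.1⟩
    set T := sInf S with hT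
    have hTS : T ∈ S := hSclosed.csInf_mem hSne hSbdd
    obtain ⟨i, hTi⟩ := Set.mem_iUnion.1 hTS
    have hT0 : 0 ≤ T := hTi.1.1
    have hTt₀ : T ≤ t₀ := hTi.1.2
    have hw0 : ∀ j, 0 < w 0 j := by
      intro j; simp only [hw, hz0, zero_add, Real.exp_zero, mul_one]
      exact mul_pos hε (hξpos j)
    have hTpos : 0 < T := by
      rcases lt_or_eq_of_le hT0 with h | h
      · exact h
      · exfalso; rw [← h] at hTi; exact absurd hTi.2 (not_le.2 (hw0 i))
    have hbefore : ∀ s, 0 ≤ s → s < T → ∀ j, 0 < w s j := by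
      intro s hs0 hsT j
      by_contra hcc
      push_neg at hcc
      exact notMem_of_lt_csInf hsT hSbdd
        (Set.mem_iUnion.2 ⟨j, ⟨⟨hs0, le_trans hsT.le hTt₀⟩, hcc⟩⟩)
    have hwTnonneg : ∀ j, 0 ≤ w T j := by
      intro j
      have hct : ContinuousAt (fun s => w s j) T := by
        have h1 : ContinuousAt (fun s => z s j) T := (hz T hT0 j).continuousAt
        have h2 : ContinuousAt (fun s => ε * Real.exp s * ξ j) T := by fun_prop
        exact h1.add h2
      have htd : Tendsto (fun s => w s j) (𝓝[<] T) (𝓝 (w T j)) :=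
        hct.continuousWithinAt.tendsto
      refine ge_of_tendsto htd ?_
      filter_upwards [Ioo_mem_nhdsLT_of_mem (show T ∈ Set.Ioc 0 T from ⟨hTpos, le_refl T⟩)]
        with s hs
      exact (hbefore s hs.1.le hs.2 j).le
    have hwTi : w T i = 0 := le_antisymm hTi.2 (hwTnonneg i)
    have hzTi : z T i = -(ε * Real.exp T * ξ i) := by
      have := hwTi; simp only [hw] at this; linarith
    -- derivative of w at T, component i
    have hξderiv : HasDerivAt (fun s => ε * Real.exp s * ξ i) (ε * Real.exp T * ξ i) T := by
      have := ((Real.hasDerivAt_exp T).const_mul ε).mul_const (ξ i)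
      simpa using this
    set d := D.mulVec (z T) i - c * u T i * z T i + b T i + ε * Real.exp T * ξ i with hd
    have hwd : HasDerivAt (fun s => w s i) d T := (hz T hT0 i).add hξderiv
    have hdle : d ≤ 0 :=
      slope_le_zero hTpos hwd hwTi (fun s hs0 hsT => (hbefore s hs0 hsT i).le)
    -- now show 0 < d
    have hxi : ∑ j, D i j * ξ j = μ * ξ i := by
      simpa [Matrix.mulVec, dotProduct] using congrFun heig i
    have hmv : D.mulVec (z T) i
        = (∑ j, D i j * w T j) - ε * Real.exp T * (μ * ξ i) := by
      have : D.mulVec (z T) i = ∑ j, D i j * z T j := by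
        simp [Matrix.mulVec, dotProduct]
      rw [this]
      have : ∀ j, D i j * z T j = D i j * w T j - ε * Real.exp T * (D i j * ξ j) := by
        intro j; simp only [hw]; ring
      rw [Finset.sum_congr rfl (fun j _ => this j), Finset.sum_sub_distrib,
        ← Finset.mul_sum, hxi]
    have hsum_nonneg : 0 ≤ ∑ j, D i j * w T j := by
      refine Finset.sum_nonneg fun j _ => ?_
      rcases eq_or_ne j i with rfl | hne
      · rw [hwTi]; simp
      · exact mul_nonneg (hMetzler i j (Ne.symm hne)) (hwTnonneg j)
    have hu0 : 0 ≤ u T i := hunonneg T hT0 i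
    have hb0 : 0 ≤ b T i := hb T hT0 i
    have hpos1 : 0 < ε * Real.exp T * ξ i := mul_pos (mul_pos hε (Real.exp_pos T)) (hξpos i)
    have : 0 < d := by
      rw [hd, hmv, hzTi]
      nlinarith [mul_nonneg (mul_nonneg hc.le hu0) hpos1.le,
        mul_nonneg (neg_nonneg.2 hμ) (mul_nonneg (mul_nonneg hε.le (Real.exp_pos T).le) (hξpos i).le)]
    linarith
  intro t ht i
  by_contra h
  push_neg at h
  have hpos : 0 < Real.exp t * ξ i := mul_pos (Real.exp_pos t) (hξpos i)
  have hε : 0 < -z t i / (Real.exp t * ξ i) := div_pos (by linarith) hpos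
  have h2 := main _ hε t ht i
  rw [mul_assoc, div_mul_cancel₀ (-z t i) (ne_of_gt hpos)] at h2
  linarith

/-- (Inequality (3.24) of the paper.) If `v` solves the linearized system
`dv_t/dt = D v_t − c u_t ⊙ v_t` with `v_0 = ξ`, where `u` is a nonnegative solution of
the cumulant system and `D ξ = μ ξ` with `ξ > 0`, then componentwise for all `t ≥ 0`:
`exp(μt − c ∫₀ᵗ max_i u_{s,i} ds) ξ ≤ v_t ≤ exp(μt − c ∫₀ᵗ min_i u_{s,i} ds) ξ`. -/
theorem stmt8 (k : ℕ) (hk : 1 ≤ k) (c : ℝ) (hc : 0 < c)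
    (D : Matrix (Fin k) (Fin k) ℝ)
    (hMetzler : ∀ i j : Fin k, i ≠ j → 0 ≤ D i j)
    (μ : ℝ) (hμ : μ ≤ 0) (ξ : Fin k → ℝ) (hξpos : ∀ i, 0 < ξ i)
    (heig : D.mulVec ξ = μ • ξ)
    (u : ℝ → Fin k → ℝ)
    (husol : ∀ t ∈ Set.Ici (0 : ℝ),
      HasDerivAt u (D.mulVec (u t) - (c / 2) • (u t * u t)) t)
    (hunonneg : ∀ t ∈ Set.Ici (0 : ℝ), ∀ i : Fin k, 0 ≤ u t i)
    (v : ℝ → Fin k → ℝ)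
    (hvsol : ∀ t ∈ Set.Ici (0 : ℝ),
      HasDerivAt v (D.mulVec (v t) - c • (u t * v t)) t)
    (hvinit : v 0 = ξ) :
    ∀ t ≥ (0 : ℝ), ∀ i : Fin k,
      Real.exp (μ * t - c * ∫ s in (0 : ℝ)..t, ⨆ j, u s j) * ξ i ≤ v t i ∧
      v t i ≤ Real.exp (μ * t - c * ∫ s in (0 : ℝ)..t, ⨅ j, u s j) * ξ i := by
  haveI : Nonempty (Fin k) := ⟨⟨0, hk⟩⟩
  have hucont : ∀ j : Fin k, Continuous fun s : ℝ => u (max s 0) j := by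
    intro j
    rw [continuous_iff_continuousAt]
    intro s
    have h1 : ContinuousAt u (max s 0) := (husol _ (le_max_right s 0)).continuousAt
    have h2 : ContinuousAt (fun s : ℝ => max s 0) s :=
      (continuous_id.max continuous_const).continuousAt
    have h3 : ContinuousAt (fun s : ℝ => u (max s 0)) s :=
      ContinuousAt.comp (f := fun s : ℝ => max s 0) (x := s) h1 h2
    exact (continuous_apply j).continuousAt.comp h3
  set M : ℝ → ℝ := fun s => ⨆ j, u (max s 0) j with hM
  set m : ℝ → ℝ := fun s => ⨅ j, u (max s 0) j with hm
  have hMcont : Continuous M := by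
    have hMeq : M = fun s => Finset.univ.sup' Finset.univ_nonempty
        (fun j => u (max s 0) j) := by
      funext s; exact (Finset.sup'_univ_eq_ciSup _).symm
    rw [hMeq, continuous_iff_continuousAt]
    intro s
    exact ContinuousAt.finset_sup'_apply _ fun j _ => (hucont j).continuousAt
  have hmcont : Continuous m := by
    have hmeq : m = fun s => Finset.univ.inf' Finset.univ_nonempty
        (fun j => u (max s 0) j) := by
      funext s; exact (Finset.inf'_univ_eq_ciInf _).symm
    rw [hmeq, continuous_iff_continuousAt]
    intro s
    exact ContinuousAt.finset_inf'_apply _ fun j _ => (hucont j).continuousAt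
  set F : ℝ → ℝ := fun x => ∫ s in (0:ℝ)..x, M s with hF
  set G : ℝ → ℝ := fun x => ∫ s in (0:ℝ)..x, m s with hG
  have hFd : ∀ r : ℝ, HasDerivAt F (M r) r := fun r =>
    (hMcont.integral_hasStrictDerivAt 0 r).hasDerivAt
  have hGd : ∀ r : ℝ, HasDerivAt G (m r) r := fun r =>
    (hmcont.integral_hasStrictDerivAt 0 r).hasDerivAt
  have huleM : ∀ τ : ℝ, 0 ≤ τ → ∀ i, u τ i ≤ M τ := by
    intro τ hτ i
    have h : u (max τ 0) i ≤ M τ := le_ciSup (Set.Finite.bddAbove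
      (Set.finite_range fun j => u (max τ 0) j)) i
    rw [max_eq_left hτ] at h
    exact h
  have hmleu : ∀ τ : ℝ, 0 ≤ τ → ∀ i, m τ ≤ u τ i := by
    intro τ hτ i
    have h : m τ ≤ u (max τ 0) i := ciInf_le (Set.Finite.bddBelow
      (Set.finite_range fun j => u (max τ 0) j)) i
    rw [max_eq_left hτ] at h
    exact h
  -- lower bound
  set z1 : ℝ → Fin k → ℝ := fun t => v t - Real.exp (μ*t - c*F t) • ξ with hz1
  set b1 : ℝ → Fin k → ℝ :=
    fun t i => c * (M t - u t i) * (Real.exp (μ*t - c*F t) * ξ i) with hb1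
  have hz1d : ∀ τ ∈ Set.Ici (0:ℝ), ∀ i, HasDerivAt (fun s => z1 s i)
      (D.mulVec (z1 τ) i - c * u τ i * z1 τ i + b1 τ i) τ := by
    intro τ hτ i
    have hvd : HasDerivAt (fun s => v s i)
        (D.mulVec (v τ) i - c * (u τ i * v τ i)) τ := by
      have := hasDerivAt_pi.1 (hvsol τ hτ) i
      simpa [Pi.sub_apply, Pi.smul_apply, Pi.mul_apply, smul_eq_mul] using this
    have hed : HasDerivAt (fun s => μ*s - c*F s) (μ - c * M τ) τ := by
      exact (((hasDerivAt_id τ).const_mul μ).sub ((hFd τ).const_mul c)).congr_deriv (by simp)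
    have hLd : HasDerivAt (fun s => Real.exp (μ*s - c*F s) * ξ i)
        (Real.exp (μ*τ - c*F τ) * (μ - c * M τ) * ξ i) τ := hed.exp.mul_const (ξ i)
    have hcomb := hvd.sub hLd
    have hmv : D.mulVec (z1 τ) i
        = D.mulVec (v τ) i - Real.exp (μ*τ - c*F τ) * (μ * ξ i) := by
      have h1 : D.mulVec (z1 τ) = D.mulVec (v τ)
          - Real.exp (μ*τ - c*F τ) • (μ • ξ) := by
        rw [hz1, Matrix.mulVec_sub, Matrix.mulVec_smul, heig]
      have := congrFun h1 i
      simpa [Pi.sub_apply, Pi.smul_apply, smul_eq_mul, mul_assoc] using this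
    have hval : D.mulVec (z1 τ) i - c * u τ i * z1 τ i + b1 τ i
        = D.mulVec (v τ) i - c * (u τ i * v τ i)
          - Real.exp (μ*τ - c*F τ) * (μ - c*M τ) * ξ i := by
      rw [hmv]
      have hz1a : z1 τ i = v τ i - Real.exp (μ*τ - c*F τ) * ξ i := rfl
      have hb1a : b1 τ i
          = c * (M τ - u τ i) * (Real.exp (μ*τ - c*F τ) * ξ i) := rfl
      rw [hz1a, hb1a]; ring
    rw [hval]
    exact hcomb
  have hb1n : ∀ τ ∈ Set.Ici (0:ℝ), ∀ i, 0 ≤ b1 τ i := by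
    intro τ hτ i
    have h1 := huleM τ hτ i
    have h2 : (0:ℝ) < Real.exp (μ*τ - c*F τ) * ξ i :=
      mul_pos (Real.exp_pos _) (hξpos i)
    have : (0:ℝ) ≤ c * (M τ - u τ i) := mul_nonneg hc.le (by linarith)
    exact mul_nonneg this h2.le
  have hz10 : ∀ i, z1 0 i = 0 := by
    intro i
    have : F 0 = 0 := intervalIntegral.integral_same
    simp [hz1, this, hvinit]
  have hlow := key_invariance k c hc D hMetzler μ hμ ξ hξpos heig u hunonneg
    z1 b1 hz1d hb1n hz10
  -- upper bound
  set z2 : ℝ → Fin k → ℝ := fun t => Real.exp (μ*t - c*G t) • ξ - v t with hz2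
  set b2 : ℝ → Fin k → ℝ :=
    fun t i => c * (u t i - m t) * (Real.exp (μ*t - c*G t) * ξ i) with hb2
  have hz2d : ∀ τ ∈ Set.Ici (0:ℝ), ∀ i, HasDerivAt (fun s => z2 s i)
      (D.mulVec (z2 τ) i - c * u τ i * z2 τ i + b2 τ i) τ := by
    intro τ hτ i
    have hvd : HasDerivAt (fun s => v s i)
        (D.mulVec (v τ) i - c * (u τ i * v τ i)) τ := by
      have := hasDerivAt_pi.1 (hvsol τ hτ) i
      simpa [Pi.sub_apply, Pi.smul_apply, Pi.mul_apply, smul_eq_mul] using this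
    have hed : HasDerivAt (fun s => μ*s - c*G s) (μ - c * m τ) τ := by
      exact (((hasDerivAt_id τ).const_mul μ).sub ((hGd τ).const_mul c)).congr_deriv (by simp)
    have hLd : HasDerivAt (fun s => Real.exp (μ*s - c*G s) * ξ i)
        (Real.exp (μ*τ - c*G τ) * (μ - c * m τ) * ξ i) τ := hed.exp.mul_const (ξ i)
    have hcomb := hLd.sub hvd
    have hmv : D.mulVec (z2 τ) i
        = Real.exp (μ*τ - c*G τ) * (μ * ξ i) - D.mulVec (v τ) i := by
      have h1 : D.mulVec (z2 τ) = Real.exp (μ*τ - c*G τ) • (μ • ξ)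
          - D.mulVec (v τ) := by
        rw [hz2, Matrix.mulVec_sub, Matrix.mulVec_smul, heig]
      have := congrFun h1 i
      simpa [Pi.sub_apply, Pi.smul_apply, smul_eq_mul, mul_assoc] using this
    have hval : D.mulVec (z2 τ) i - c * u τ i * z2 τ i + b2 τ i
        = Real.exp (μ*τ - c*G τ) * (μ - c*m τ) * ξ i
          - (D.mulVec (v τ) i - c * (u τ i * v τ i)) := by
      rw [hmv]
      have hz2a : z2 τ i = Real.exp (μ*τ - c*G τ) * ξ i - v τ i := rfl
      have hb2a : b2 τ i
          = c * (u τ i - m τ) * (Real.exp (μ*τ - c*G τ) * ξ i) := rfl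
      rw [hz2a, hb2a]; ring
    rw [hval]
    exact hcomb
  have hb2n : ∀ τ ∈ Set.Ici (0:ℝ), ∀ i, 0 ≤ b2 τ i := by
    intro τ hτ i
    have h1 := hmleu τ hτ i
    have h2 : (0:ℝ) < Real.exp (μ*τ - c*G τ) * ξ i :=
      mul_pos (Real.exp_pos _) (hξpos i)
    have : (0:ℝ) ≤ c * (u τ i - m τ) := mul_nonneg hc.le (by linarith)
    exact mul_nonneg this h2.le
  have hz20 : ∀ i, z2 0 i = 0 := by
    intro i
    have : G 0 = 0 := intervalIntegral.integral_same
    simp [hz2, this, hvinit]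
  have hhigh := key_invariance k c hc D hMetzler μ hμ ξ hξpos heig u hunonneg
    z2 b2 hz2d hb2n hz20
  -- conclusion
  intro t ht i
  have hFt : F t = ∫ s in (0:ℝ)..t, ⨆ j, u s j := by
    apply intervalIntegral.integral_congr
    intro s hs
    rw [Set.uIcc_of_le ht] at hs
    simp only [hM]
    rw [max_eq_left hs.1]
  have hGt : G t = ∫ s in (0:ℝ)..t, ⨅ j, u s j := by
    apply intervalIntegral.integral_congr
    intro s hs
    rw [Set.uIcc_of_le ht] at hs
    simp only [hm]
    rw [max_eq_left hs.1]
  have h1 := hlow t ht i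
  have h2 := hhigh t ht i
  have hz1t : z1 t i = v t i - Real.exp (μ*t - c*F t) * ξ i := rfl
  have hz2t : z2 t i = Real.exp (μ*t - c*G t) * ξ i - v t i := rfl
  rw [hz1t] at h1
  rw [hz2t] at h2
  rw [hFt] at h1
  rw [hGt] at h2
  exact ⟨by linarith, by linarith⟩
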